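/- Let n, k be positive integers with 2k ≤ n, and consider the standard cyclic ordering of {0,1,...,n-1}. If F is an intersecting family of k-element subsets of Z_n each of which is a cyclic interval (a set of the form {a, a+1, ..., a+k-1} mod n), then |F| ≤ k. -/

import Mathlib

private lemma natCast_inj_of_lt' {n : ℕ} (hn : 0 < n) {s t : ℕ} (hs : s < n) (ht : t < n)
    (h : (s : ZMod n) = t) : s = t := by
  haveI : NeZero n := ⟨hn.ne'⟩
  have := congrArg ZMod.val h
  rwa [ZMod.val_cast_of_lt hs, ZMod.val_cast_of_lt ht] at this

private def itv (n k : ℕ) (a : ZMod n) : Finset (ZMod n) :=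
  (Finset.range k).image (fun t : ℕ => a + (t : ZMod n))

private lemma mem_itv {n k : ℕ} {a x : ZMod n} :
    x ∈ itv n k a ↔ ∃ t, t < k ∧ x = a + (t : ZMod n) := by
  simp only [itv, Finset.mem_image, Finset.mem_range]
  constructor
  · rintro ⟨t, ht, rfl⟩; exact ⟨t, ht, rfl⟩
  · rintro ⟨t, ht, rfl⟩; exact ⟨t, ht, rfl⟩

private lemma itv_inj {n k : ℕ} (hn : 0 < n) (hk : 0 < k) (hkn : 2 * k ≤ n)
    {a b : ZMod n} (h : itv n k a = itv n k b) : a = b := by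
  have ha : a ∈ itv n k b := by
    rw [← h, mem_itv]; exact ⟨0, hk, by simp⟩
  have hb : b ∈ itv n k a := by
    rw [h, mem_itv]; exact ⟨0, hk, by simp⟩
  rw [mem_itv] at ha hb
  obtain ⟨t, ht, hat⟩ := ha
  obtain ⟨s, hs, hbs⟩ := hb
  have h1 : a = a + ((s + t : ℕ) : ZMod n) := by
    push_cast
    rw [← add_assoc, ← hbs, ← hat]
  have h2 : ((s + t : ℕ) : ZMod n) = ((0 : ℕ) : ZMod n) := by
    have := (left_eq_add).mp h1
    simpa using this
  have := natCast_inj_of_lt' hn (by omega) (by omega) h2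
  have hs0 : s = 0 := by omega
  rw [hbs, hs0]; simp

private lemma itv_disj {n k : ℕ} (hn : 0 < n) (hkn : 2 * k ≤ n) {a : ZMod n}
    (h : (itv n k a ∩ itv n k (a + (k : ZMod n))).Nonempty) : False := by
  obtain ⟨x, hx⟩ := h
  rw [Finset.mem_inter, mem_itv, mem_itv] at hx
  obtain ⟨⟨t, ht, hxt⟩, ⟨s, hs, hxs⟩⟩ := hx
  have h2 : a + (t : ZMod n) = a + ((k + s : ℕ) : ZMod n) := by
    rw [← hxt, hxs]; push_cast; ring
  have h3 : (t : ZMod n) = ((k + s : ℕ) : ZMod n) := add_left_cancel h2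
  have := natCast_inj_of_lt' hn (by omega) (by omega) h3
  omega

theorem stmt_2 (n k : ℕ) (hn : 0 < n) (hk : 0 < k) (hkn : 2 * k ≤ n)
    (F : Finset (Finset (ZMod n)))
    (hInt : ∀ S ∈ F, ∃ a : ZMod n, S = (Finset.range k).image (fun t : ℕ => a + (t : ZMod n)))
    (hF : ∀ A ∈ F, ∀ B ∈ F, (A ∩ B).Nonempty) :
    F.card ≤ k := by
  classical
  haveI : NeZero n := ⟨hn.ne'⟩
  rcases F.eq_empty_or_nonempty with rfl | ⟨S₀, hS₀⟩
  · simpa using Nat.zero_le k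
  obtain ⟨a₀, ha₀⟩ := hInt S₀ hS₀
  have ha₀' : S₀ = itv n k a₀ := ha₀
  set st : Finset (ZMod n) → ZMod n := fun S =>
    if h : ∃ a : ZMod n, S = itv n k a then Classical.choose h else 0 with hstdef
  have hstS : ∀ S ∈ F, S = itv n k (st S) := by
    intro S hS
    obtain ⟨a, ha⟩ := hInt S hS
    have hex : ∃ a : ZMod n, S = itv n k a := ⟨a, ha⟩
    have : st S = Classical.choose hex := by
      simp only [hstdef, dif_pos hex]
    rw [this]
    exact Classical.choose_spec hex
  have hD : ∀ S ∈ F, ∃ m, m < 2 * k - 1 ∧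
      st S = a₀ + (m : ZMod n) - ((k - 1 : ℕ) : ZMod n) := by
    intro S hS
    obtain ⟨x, hx⟩ := hF S hS S₀ hS₀
    rw [Finset.mem_inter] at hx
    obtain ⟨hx1, hx2⟩ := hx
    rw [hstS S hS, mem_itv] at hx1
    have hx2' : x ∈ itv n k a₀ := by rw [← ha₀']; exact hx2
    rw [mem_itv] at hx2'
    obtain ⟨t, ht, hxt⟩ := hx1
    obtain ⟨s, hs, hxs⟩ := hx2'
    refine ⟨s + ((k - 1) - t), by omega, ?_⟩
    have h1 : ((k - 1) - t : ℕ) + t = k - 1 := by omega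
    have h2 : ((((k - 1) - t : ℕ)) : ZMod n) + (t : ZMod n) = ((k - 1 : ℕ) : ZMod n) := by
      rw [← Nat.cast_add, h1]
    have h3 : st S + (t : ZMod n) = a₀ + (s : ZMod n) := by rw [← hxt, ← hxs]
    have h4 : st S = a₀ + (s : ZMod n) - (t : ZMod n) := by
      rw [← h3]; ring
    rw [Nat.cast_add, h4, ← h2]; ring
  set D : Finset (ZMod n) → ℕ :=
    fun S => (st S - a₀ + ((k - 1 : ℕ) : ZMod n)).val with hDdef
  have hDspec : ∀ S ∈ F, D S < 2 * k - 1 ∧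
      st S = a₀ + ((D S : ℕ) : ZMod n) - ((k - 1 : ℕ) : ZMod n) := by
    intro S hS
    obtain ⟨m, hm1, hm2⟩ := hD S hS
    have heq : st S - a₀ + ((k - 1 : ℕ) : ZMod n) = (m : ZMod n) := by rw [hm2]; ring
    have hval : D S = m := by
      show (st S - a₀ + ((k - 1 : ℕ) : ZMod n)).val = m
      rw [heq, ZMod.val_cast_of_lt (by omega)]
    constructor
    · omega
    · rw [hval]; exact hm2
  have hcard : F.card ≤ (Finset.range k).card := by
    apply Finset.card_le_card_of_injOn (fun S => D S % k)
    · intro S _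
      simp only [Finset.mem_range]
      exact Finset.mem_coe.mpr (Finset.mem_range.mpr (Nat.mod_lt _ hk))
    · intro S hS S' hS' hEq
      obtain ⟨h1, h2⟩ := hDspec S hS
      obtain ⟨h1', h2'⟩ := hDspec S' hS'
      have hmod : D S % k = D S' % k := hEq
      have e1 := Nat.div_add_mod (D S) k
      have e2 := Nat.div_add_mod (D S') k
      have q1 : D S / k < 2 := Nat.div_lt_of_lt_mul (by omega)
      have q2 : D S' / k < 2 := Nat.div_lt_of_lt_mul (by omega)
      have hcases : D S = D S' ∨ D S = D S' + k ∨ D S' = D S + k := by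
        have r1 : D S / k = 0 ∨ D S / k = 1 :=
          Nat.le_one_iff_eq_zero_or_eq_one.mp (Nat.lt_succ_iff.mp q1)
        have r2 : D S' / k = 0 ∨ D S' / k = 1 :=
          Nat.le_one_iff_eq_zero_or_eq_one.mp (Nat.lt_succ_iff.mp q2)
        rcases r1 with e | e <;> rcases r2 with e' | e' <;>
            rw [e] at e1 <;> rw [e'] at e2 <;> omega
      rcases hcases with heq' | heq' | heq'
      · have : st S = st S' := by rw [h2, h2', heq']
        rw [hstS S hS, hstS S' hS', this]
      · exfalso
        have hst : st S = st S' + (k : ZMod n) := by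
          rw [h2, h2', heq']; push_cast; ring
        have hne := hF S' hS' S hS
        rw [hstS S hS, hstS S' hS', hst] at hne
        exact itv_disj hn hkn hne
      · exfalso
        have hst : st S' = st S + (k : ZMod n) := by
          rw [h2, h2', heq']; push_cast; ring
        have hne := hF S hS S' hS'
        rw [hstS S hS, hstS S' hS', hst] at hne
        exact itv_disj hn hkn hne
  simpa using hcard
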